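/- The function κ ↦ −(1/(3(1+κ²))) · [ (2+κ²)/(1+κ²) − 2 E(κ)/K(κ) ] is strictly decreasing on the interval (0,1). -/

import Mathlib

open Real MeasureTheory intervalIntegral Set Metric

/-- Complete elliptic integral of the first kind,
`K(κ) = ∫₀^{π/2} (1 − κ² sin²t)^{−1/2} dt`. -/
noncomputable def ellK (κ : ℝ) : ℝ :=
  ∫ t in (0:ℝ)..(Real.pi/2), 1 / Real.sqrt (1 - κ^2 * Real.sin t ^ 2)

/-- Complete elliptic integral of the second kind,
`E(κ) = ∫₀^{π/2} (1 − κ² sin²t)^{1/2} dt`. -/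
noncomputable def ellE (κ : ℝ) : ℝ :=
  ∫ t in (0:ℝ)..(Real.pi/2), Real.sqrt (1 - κ^2 * Real.sin t ^ 2)

lemma W_pos {κ : ℝ} (h : κ^2 < 1) (t : ℝ) : 0 < 1 - κ^2 * Real.sin t ^ 2 := by
  nlinarith [Real.sin_sq_le_one t, sq_nonneg (κ * Real.sin t), sq_nonneg κ]

lemma q_pos {κ : ℝ} (h : κ^2 < 1) (t : ℝ) : 0 < Real.sqrt (1 - κ^2 * Real.sin t ^ 2) :=
  Real.sqrt_pos.2 (W_pos h t)

lemma q_sq {κ : ℝ} (h : κ^2 < 1) (t : ℝ) :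
    Real.sqrt (1 - κ^2 * Real.sin t ^ 2) ^ 2 = 1 - κ^2 * Real.sin t ^ 2 :=
  Real.sq_sqrt (W_pos h t).le

lemma q_le_one {κ : ℝ} (t : ℝ) : Real.sqrt (1 - κ^2 * Real.sin t ^ 2) ≤ 1 := by
  apply Real.sqrt_le_one.2
  nlinarith [sq_nonneg (κ * Real.sin t)]

lemma q_lb {κ c : ℝ} (hx : |κ| ≤ c) (t : ℝ) :
    Real.sqrt (1 - c^2) ≤ Real.sqrt (1 - κ^2 * Real.sin t ^ 2) := by
  apply Real.sqrt_le_sqrt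
  have h2 : κ^2 ≤ c^2 := by nlinarith [sq_abs κ, abs_nonneg κ]
  nlinarith [Real.sin_sq_le_one t, sq_nonneg κ]

lemma contq {κ : ℝ} : Continuous fun t => Real.sqrt (1 - κ^2 * Real.sin t ^ 2) := by
  fun_prop

lemma contK {κ : ℝ} (h : κ^2 < 1) :
    Continuous fun t => 1 / Real.sqrt (1 - κ^2 * Real.sin t ^ 2) :=
  continuous_const.div contq fun t => (q_pos h t).ne'

lemma cont3 {κ : ℝ} (h : κ^2 < 1) :
    Continuous fun t => (1 - κ^2) / Real.sqrt (1 - κ^2 * Real.sin t ^ 2) ^ 3 :=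
  continuous_const.div (contq.pow 3) fun t => pow_ne_zero _ (q_pos h t).ne'

lemma hasDerivAt_sqrtW (t : ℝ) {x : ℝ} (hx : x^2 < 1) :
    HasDerivAt (fun x : ℝ => Real.sqrt (1 - x^2 * Real.sin t ^ 2))
      (-(x * Real.sin t ^ 2) / Real.sqrt (1 - x^2 * Real.sin t ^ 2)) x := by
  have hg : HasDerivAt (fun x : ℝ => 1 - x^2 * Real.sin t ^ 2)
      (-(2 * x * Real.sin t ^ 2)) x := by
    simpa using ((hasDerivAt_pow 2 x).mul_const (Real.sin t ^ 2)).const_sub 1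
  have := hg.sqrt (W_pos hx t).ne'
  convert this using 1
  field_simp [(q_pos hx t).ne']

lemma hasDerivAt_invSqrtW (t : ℝ) {x : ℝ} (hx : x^2 < 1) :
    HasDerivAt (fun x : ℝ => 1 / Real.sqrt (1 - x^2 * Real.sin t ^ 2))
      (x * Real.sin t ^ 2 / Real.sqrt (1 - x^2 * Real.sin t ^ 2) ^ 3) x := by
  have hg : HasDerivAt (fun x : ℝ => 1 - x^2 * Real.sin t ^ 2)
      (-(2 * x * Real.sin t ^ 2)) x := by
    simpa using ((hasDerivAt_pow 2 x).mul_const (Real.sin t ^ 2)).const_sub 1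
  have hq := hg.sqrt (W_pos hx t).ne'
  have : HasDerivAt (fun y => 1 / Real.sqrt (1 - y^2 * Real.sin t ^ 2)) _ x :=
    (hasDerivAt_const x (1:ℝ)).div hq (q_pos hx t).ne'
  convert this using 1
  have h2 := q_sq hx t
  field_simp [(q_pos hx t).ne']
  ring

lemma ball_abs_le {κ : ℝ} (h0 : 0 < κ) (h1 : κ < 1) :
    ∀ x ∈ ball κ ((1 - κ)/2), |x| ≤ (1 + κ)/2 := by
  intro x hx
  rw [mem_ball, Real.dist_eq] at hx
  rw [abs_lt] at hx
  rw [abs_le]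
  constructor <;> linarith

lemma c_sq_lt_one {κ : ℝ} (h0 : 0 < κ) (h1 : κ < 1) : ((1 + κ)/2)^2 < 1 := by nlinarith

lemma hasDerivAt_ellK_int {κ : ℝ} (h0 : 0 < κ) (h1 : κ < 1) :
    HasDerivAt ellK
      (∫ t in (0:ℝ)..(Real.pi/2),
        κ * Real.sin t ^ 2 / Real.sqrt (1 - κ^2 * Real.sin t ^ 2) ^ 3) κ := by
  have hκ2 : κ^2 < 1 := by nlinarith
  set c := (1 + κ)/2 with hc
  have hc1 : c^2 < 1 := c_sq_lt_one h0 h1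
  have hεpos : (0:ℝ) < (1 - κ)/2 := by linarith
  have hqc : (0:ℝ) < Real.sqrt (1 - c^2) := Real.sqrt_pos.2 (by nlinarith)
  have key := intervalIntegral.hasDerivAt_integral_of_dominated_loc_of_deriv_le
    (F := fun x t => 1 / Real.sqrt (1 - x^2 * Real.sin t ^ 2))
    (F' := fun x t => x * Real.sin t ^ 2 / Real.sqrt (1 - x^2 * Real.sin t ^ 2) ^ 3)
    (x₀ := κ) (a := (0:ℝ)) (b := Real.pi/2) (μ := volume)
    (bound := fun _ => 1 / Real.sqrt (1 - c^2) ^ 3) (ball_mem_nhds κ hεpos)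
    (Filter.Eventually.of_forall fun x =>
      ((by fun_prop : Measurable fun t => 1 / Real.sqrt (1 - x^2 * Real.sin t ^ 2))).aestronglyMeasurable)
    ((contK hκ2).intervalIntegrable 0 (Real.pi/2))
    (((continuous_const.mul (Real.continuous_sin.pow 2)).div (contq.pow 3)
      fun t => pow_ne_zero _ (q_pos hκ2 t).ne').aestronglyMeasurable)
    (Filter.Eventually.of_forall fun t _ x hx => by
      have hxc : |x| ≤ c := ball_abs_le h0 h1 x hx
      have hx2 : x^2 < 1 := by nlinarith [sq_abs x, abs_nonneg x]
      have hqlb := q_lb hxc t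
      have hqpos := q_pos hx2 t
      rw [Real.norm_eq_abs, abs_div, abs_of_pos (pow_pos hqpos 3)]
      show |x * Real.sin t ^ 2| / _ ≤ 1 / Real.sqrt (1 - c^2) ^ 3
      have hnum : |x * Real.sin t ^ 2| ≤ 1 := by
        rw [abs_mul]
        have h1' : |Real.sin t ^ 2| ≤ 1 := by
          rw [abs_of_nonneg (sq_nonneg _)]; exact Real.sin_sq_le_one t
        nlinarith [abs_nonneg x, abs_nonneg (Real.sin t ^ 2)]
      exact div_le_div₀ zero_le_one hnum (pow_pos hqc 3)
        (pow_le_pow_left₀ hqc.le hqlb 3))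
    intervalIntegrable_const
    (Filter.Eventually.of_forall fun t _ x hx => by
      have hxc : |x| ≤ c := ball_abs_le h0 h1 x hx
      have hx2 : x^2 < 1 := by nlinarith [sq_abs x, abs_nonneg x]
      exact hasDerivAt_invSqrtW t hx2)
  exact key.2

lemma hasDerivAt_ellE_int {κ : ℝ} (h0 : 0 < κ) (h1 : κ < 1) :
    HasDerivAt ellE
      (∫ t in (0:ℝ)..(Real.pi/2),
        -(κ * Real.sin t ^ 2) / Real.sqrt (1 - κ^2 * Real.sin t ^ 2)) κ := by
  have hκ2 : κ^2 < 1 := by nlinarith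
  set c := (1 + κ)/2 with hc
  have hc1 : c^2 < 1 := c_sq_lt_one h0 h1
  have hεpos : (0:ℝ) < (1 - κ)/2 := by linarith
  have hqc : (0:ℝ) < Real.sqrt (1 - c^2) := Real.sqrt_pos.2 (by nlinarith)
  have key := intervalIntegral.hasDerivAt_integral_of_dominated_loc_of_deriv_le
    (F := fun x t => Real.sqrt (1 - x^2 * Real.sin t ^ 2))
    (F' := fun x t => -(x * Real.sin t ^ 2) / Real.sqrt (1 - x^2 * Real.sin t ^ 2))
    (x₀ := κ) (a := (0:ℝ)) (b := Real.pi/2) (μ := volume)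
    (bound := fun _ => 1 / Real.sqrt (1 - c^2)) (ball_mem_nhds κ hεpos)
    (Filter.Eventually.of_forall fun x =>
      ((by fun_prop : Measurable fun t => Real.sqrt (1 - x^2 * Real.sin t ^ 2))).aestronglyMeasurable)
    (contq.intervalIntegrable 0 (Real.pi/2))
    (((continuous_const.mul (Real.continuous_sin.pow 2)).neg.div contq
      fun t => (q_pos hκ2 t).ne').aestronglyMeasurable)
    (Filter.Eventually.of_forall fun t _ x hx => by
      have hxc : |x| ≤ c := ball_abs_le h0 h1 x hx
      have hx2 : x^2 < 1 := by nlinarith [sq_abs x, abs_nonneg x]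
      have hqlb := q_lb hxc t
      have hqpos := q_pos hx2 t
      rw [Real.norm_eq_abs, abs_div, abs_of_pos hqpos, abs_neg]
      show |x * Real.sin t ^ 2| / _ ≤ 1 / Real.sqrt (1 - c^2)
      have hnum : |x * Real.sin t ^ 2| ≤ 1 := by
        rw [abs_mul]
        have h1' : |Real.sin t ^ 2| ≤ 1 := by
          rw [abs_of_nonneg (sq_nonneg _)]; exact Real.sin_sq_le_one t
        nlinarith [abs_nonneg x, abs_nonneg (Real.sin t ^ 2)]
      exact div_le_div₀ zero_le_one hnum hqc hqlb)
    intervalIntegrable_const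
    (Filter.Eventually.of_forall fun t _ x hx => by
      have hxc : |x| ≤ c := ball_abs_le h0 h1 x hx
      have hx2 : x^2 < 1 := by nlinarith [sq_abs x, abs_nonneg x]
      exact hasDerivAt_sqrtW t hx2)
  exact key.2

lemma hasDerivAt_aux {κ : ℝ} (h : κ^2 < 1) (t : ℝ) :
    HasDerivAt (fun t => κ^2 * (Real.sin t * Real.cos t) /
        Real.sqrt (1 - κ^2 * Real.sin t ^ 2))
      (Real.sqrt (1 - κ^2 * Real.sin t ^ 2)
        - (1 - κ^2) / Real.sqrt (1 - κ^2 * Real.sin t ^ 2) ^ 3) t := by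
  have hnum : HasDerivAt (fun t => κ^2 * (Real.sin t * Real.cos t))
      (κ^2 * (Real.cos t * Real.cos t + Real.sin t * -Real.sin t)) t :=
    ((Real.hasDerivAt_sin t).mul (Real.hasDerivAt_cos t)).const_mul _
  have hin : HasDerivAt (fun t => 1 - κ^2 * Real.sin t ^ 2)
      (-(κ^2 * (2 * Real.sin t ^ 1 * Real.cos t))) t := by
    simpa using (((Real.hasDerivAt_sin t).pow 2).const_mul (κ^2)).const_sub 1
  have hq := hin.sqrt (W_pos h t).ne'
  have hdiv : HasDerivAt (fun t => κ^2 * (Real.sin t * Real.cos t) /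
      Real.sqrt (1 - κ^2 * Real.sin t ^ 2)) _ t := hnum.div hq (q_pos h t).ne'
  convert hdiv using 1
  have h2 := q_sq h t
  have hpy : Real.cos t ^ 2 = 1 - Real.sin t ^ 2 := by
    nlinarith [Real.sin_sq_add_cos_sq t]
  field_simp [(q_pos h t).ne']
  linear_combination (Real.sqrt (1 - κ^2 * Real.sin t ^ 2) ^ 2 + (1 - κ^2 * Real.sin t ^ 2)
      - κ^2 + 2 * κ^2 * Real.sin t ^ 2) * h2
    - (κ^2 * Real.sqrt (1 - κ^2 * Real.sin t ^ 2) ^ 2 + κ^4 * Real.sin t ^ 2) * hpy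

/-- `∫ (1-κ²)/q³ = E`. -/

lemma integral_q3 {κ : ℝ} (h : κ^2 < 1) :
    ∫ t in (0:ℝ)..(Real.pi/2),
      (1 - κ^2) / Real.sqrt (1 - κ^2 * Real.sin t ^ 2) ^ 3 = ellE κ := by
  have hftc := intervalIntegral.integral_eq_sub_of_hasDerivAt
    (f := fun t => κ^2 * (Real.sin t * Real.cos t) / Real.sqrt (1 - κ^2 * Real.sin t ^ 2))
    (fun t _ => hasDerivAt_aux h t)
    ((contq.sub (cont3 h)).intervalIntegrable 0 (Real.pi/2))
  simp only [Real.sin_pi_div_two, Real.cos_pi_div_two, Real.sin_zero, Real.cos_zero] at hftc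
  norm_num at hftc
  rw [intervalIntegral.integral_sub (contq.intervalIntegrable 0 (Real.pi/2))
    ((cont3 h).intervalIntegrable 0 (Real.pi/2))] at hftc
  have : (ellE κ) - ∫ t in (0:ℝ)..(Real.pi/2),
      (1 - κ^2) / Real.sqrt (1 - κ^2 * Real.sin t ^ 2) ^ 3 = 0 := hftc
  linarith

lemma intK'_val {κ : ℝ} (h0 : 0 < κ) (h1 : κ < 1) :
    (∫ t in (0:ℝ)..(Real.pi/2),
        κ * Real.sin t ^ 2 / Real.sqrt (1 - κ^2 * Real.sin t ^ 2) ^ 3)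
      = (ellE κ - (1 - κ^2) * ellK κ) / (κ * (1 - κ^2)) := by
  have hκ2 : κ^2 < 1 := by nlinarith
  have hκ0 : κ ≠ 0 := h0.ne'
  have hm : (1:ℝ) - κ^2 ≠ 0 := by nlinarith
  have hpt : ∀ t : ℝ, κ * Real.sin t ^ 2 / Real.sqrt (1 - κ^2 * Real.sin t ^ 2) ^ 3
      = (1/(κ*(1-κ^2))) * ((1 - κ^2) / Real.sqrt (1 - κ^2 * Real.sin t ^ 2) ^ 3)
        - (1/κ) * (1 / Real.sqrt (1 - κ^2 * Real.sin t ^ 2)) := by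
    intro t
    have h2 := q_sq hκ2 t
    have hq := (q_pos hκ2 t).ne'
    set qq := Real.sqrt (1 - κ^2 * Real.sin t ^ 2) with hqq
    have hs : Real.sin t ^ 2 = (1 - qq^2)/κ^2 := by rw [h2]; field_simp; ring
    rw [hs]; field_simp
  simp only [hpt]
  rw [intervalIntegral.integral_sub
      (((cont3 hκ2).intervalIntegrable 0 (Real.pi/2)).const_mul _)
      (((contK hκ2).intervalIntegrable 0 (Real.pi/2)).const_mul _),
    intervalIntegral.integral_const_mul, intervalIntegral.integral_const_mul,
    integral_q3 hκ2]
  rw [show (∫ t in (0:ℝ)..(Real.pi/2), 1 / Real.sqrt (1 - κ^2 * Real.sin t ^ 2))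
      = ellK κ from rfl]
  field_simp

lemma intE'_val {κ : ℝ} (h0 : 0 < κ) (h1 : κ < 1) :
    (∫ t in (0:ℝ)..(Real.pi/2),
        -(κ * Real.sin t ^ 2) / Real.sqrt (1 - κ^2 * Real.sin t ^ 2))
      = (ellE κ - ellK κ) / κ := by
  have hκ2 : κ^2 < 1 := by nlinarith
  have hκ0 : κ ≠ 0 := h0.ne'
  have hpt : ∀ t : ℝ, -(κ * Real.sin t ^ 2) / Real.sqrt (1 - κ^2 * Real.sin t ^ 2)
      = (1/κ) * Real.sqrt (1 - κ^2 * Real.sin t ^ 2)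
        - (1/κ) * (1 / Real.sqrt (1 - κ^2 * Real.sin t ^ 2)) := by
    intro t
    have h2 := q_sq hκ2 t
    have hq := (q_pos hκ2 t).ne'
    set qq := Real.sqrt (1 - κ^2 * Real.sin t ^ 2) with hqq
    have hs : Real.sin t ^ 2 = (1 - qq^2)/κ^2 := by rw [h2]; field_simp; ring
    rw [hs]; field_simp; ring
  simp only [hpt]
  rw [intervalIntegral.integral_sub
      ((contq.intervalIntegrable 0 (Real.pi/2)).const_mul _)
      (((contK hκ2).intervalIntegrable 0 (Real.pi/2)).const_mul _),
    intervalIntegral.integral_const_mul, intervalIntegral.integral_const_mul]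
  rw [show (∫ t in (0:ℝ)..(Real.pi/2), 1 / Real.sqrt (1 - κ^2 * Real.sin t ^ 2))
      = ellK κ from rfl,
    show (∫ t in (0:ℝ)..(Real.pi/2), Real.sqrt (1 - κ^2 * Real.sin t ^ 2))
      = ellE κ from rfl]
  field_simp

lemma ellK_pos {κ : ℝ} (h : κ^2 < 1) : 0 < ellK κ := by
  have hmono : (∫ (_ : ℝ) in (0:ℝ)..(Real.pi/2), (1:ℝ)) ≤ ellK κ := by
    apply intervalIntegral.integral_mono_on (by positivity)
      intervalIntegrable_const ((contK h).intervalIntegrable 0 (Real.pi/2))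
    intro t _
    rw [le_div_iff₀ (q_pos h t)]
    simpa using q_le_one (κ := κ) t
  have : (∫ (_ : ℝ) in (0:ℝ)..(Real.pi/2), (1:ℝ)) = Real.pi/2 := by simp
  nlinarith [Real.pi_pos]

lemma ellE_ge {κ : ℝ} (h : κ^2 < 1) : (1 - κ^2) * ellK κ ≤ ellE κ := by
  rw [ellK, ← intervalIntegral.integral_const_mul]
  apply intervalIntegral.integral_mono_on (by positivity)
    (((contK h).intervalIntegrable 0 (Real.pi/2)).const_mul _)
    (contq.intervalIntegrable 0 (Real.pi/2))
  intro t _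
  rw [mul_one_div, div_le_iff₀ (q_pos h t)]
  nlinarith [q_sq h t, Real.sin_sq_le_one t, sq_nonneg κ, sq_nonneg (κ * Real.sin t)]

lemma ellE_pos {κ : ℝ} (h : κ^2 < 1) : 0 < ellE κ := by
  have := ellE_ge h
  nlinarith [ellK_pos h]

lemma key_ne {κ : ℝ} (h0 : 0 < κ) (h1 : κ < 1) :
    (1 - κ^2) * ellK κ - (1 + κ^2) * ellE κ < 0 := by
  have hκ2 : κ^2 < 1 := by nlinarith
  nlinarith [ellE_ge hκ2, mul_pos (pow_pos h0 2) (ellE_pos hκ2), ellK_pos hκ2]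

section Assembly

lemma hasDerivAt_ellK' {κ : ℝ} (h0 : 0 < κ) (h1 : κ < 1) :
    HasDerivAt ellK ((ellE κ - (1 - κ^2) * ellK κ) / (κ * (1 - κ^2))) κ := by
  have := hasDerivAt_ellK_int h0 h1
  rwa [intK'_val h0 h1] at this

lemma hasDerivAt_ellE' {κ : ℝ} (h0 : 0 < κ) (h1 : κ < 1) :
    HasDerivAt ellE ((ellE κ - ellK κ) / κ) κ := by
  have := hasDerivAt_ellE_int h0 h1
  rwa [intE'_val h0 h1] at this

noncomputable def Dmain (κ : ℝ) : ℝ :=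
  -(2 * ((1 - κ^2) * ellK κ - (1 + κ^2) * ellE κ)^2 /
    (3 * κ * (1 - κ^2) * (ellK κ)^2 * (1 + κ^2)^3))

lemma hasDerivAt_fmain {κ : ℝ} (h0 : 0 < κ) (h1 : κ < 1) :
    HasDerivAt
      (fun κ : ℝ => -(1 / (3 * (1 + κ^2))) * ((2 + κ^2) / (1 + κ^2) - 2 * ellE κ / ellK κ))
      (Dmain κ) κ := by
  have hκ2 : κ^2 < 1 := by nlinarith
  have hKpos := ellK_pos hκ2
  have hKne : ellK κ ≠ 0 := hKpos.ne'
  have hκ0 : κ ≠ 0 := h0.ne'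
  have hm : (1:ℝ) - κ^2 ≠ 0 := by nlinarith
  have hp : (1:ℝ) + κ^2 ≠ 0 := by positivity
  have hp3 : (3:ℝ) * (1 + κ^2) ≠ 0 := by positivity
  have hK := hasDerivAt_ellK' h0 h1
  have hE := hasDerivAt_ellE' h0 h1
  have h1p : HasDerivAt (fun x : ℝ => 1 + x^2) (2*κ) κ := by
    simpa using (hasDerivAt_pow 2 κ).const_add 1
  have h2p : HasDerivAt (fun x : ℝ => 2 + x^2) (2*κ) κ := by
    simpa using (hasDerivAt_pow 2 κ).const_add 2
  have h3p : HasDerivAt (fun x : ℝ => 3 * (1 + x^2)) (3 * (2*κ)) κ := h1p.const_mul 3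
  have hA : HasDerivAt (fun x : ℝ => -(1 / (3 * (1 + x^2))))
      (-((0 * (3 * (1 + κ^2)) - 1 * (3 * (2*κ))) / (3 * (1 + κ^2))^2)) κ :=
    ((hasDerivAt_const κ (1:ℝ)).div h3p hp3).neg
  have hB : HasDerivAt (fun x : ℝ => (2 + x^2) / (1 + x^2))
      ((2*κ * (1 + κ^2) - (2 + κ^2) * (2*κ)) / (1 + κ^2)^2) κ := h2p.div h1p hp
  have hC : HasDerivAt (fun x : ℝ => 2 * ellE x / ellK x)
      ((2 * ((ellE κ - ellK κ) / κ) * ellK κ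
        - 2 * ellE κ * ((ellE κ - (1 - κ^2) * ellK κ) / (κ * (1 - κ^2)))) / (ellK κ)^2) κ :=
    (hE.const_mul 2).div hK hKne
  have hF : HasDerivAt (fun κ : ℝ => -(1 / (3 * (1 + κ^2))) *
      ((2 + κ^2) / (1 + κ^2) - 2 * ellE κ / ellK κ)) _ κ := hA.mul (hB.sub hC)
  convert hF using 1
  rw [Dmain]
  field_simp
  ring

lemma Dmain_neg {κ : ℝ} (h0 : 0 < κ) (h1 : κ < 1) : Dmain κ < 0 := by
  have hκ2 : κ^2 < 1 := by nlinarith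
  have hKpos := ellK_pos hκ2
  have hne := key_ne h0 h1
  have hnum : 0 < 2 * ((1 - κ^2) * ellK κ - (1 + κ^2) * ellE κ)^2 := by
    nlinarith [mul_pos_of_neg_of_neg hne hne]
  have hden : 0 < 3 * κ * (1 - κ^2) * (ellK κ)^2 * (1 + κ^2)^3 := by
    have e1 : (0:ℝ) < 1 - κ^2 := by nlinarith
    have e2 : 0 < (ellK κ)^2 := pow_pos hKpos 2
    have e3 : (0:ℝ) < (1 + κ^2)^3 := by positivity
    exact mul_pos (mul_pos (mul_pos (mul_pos (by norm_num : (0:ℝ) < 3) h0) e1) e2) e3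
  have hq : 0 < 2 * ((1 - κ^2) * ellK κ - (1 + κ^2) * ellE κ)^2 /
      (3 * κ * (1 - κ^2) * (ellK κ)^2 * (1 + κ^2)^3) := div_pos hnum hden
  rw [Dmain]
  linarith

end Assembly

/-- the function
`κ ↦ −(1/(3(1+κ²)))·[(2+κ²)/(1+κ²) − 2E(κ)/K(κ)]` is strictly decreasing on `(0,1)`. -/
theorem statement14 :
    StrictAntiOn
      (fun κ : ℝ => -(1 / (3 * (1 + κ^2))) * ((2 + κ^2) / (1 + κ^2) - 2 * ellE κ / ellK κ))
      (Set.Ioo (0:ℝ) 1) := by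
  apply strictAntiOn_of_deriv_neg (convex_Ioo 0 1)
  · intro x hx
    exact ((hasDerivAt_fmain hx.1 hx.2).differentiableAt).continuousAt.continuousWithinAt
  · intro x hx
    rw [interior_Ioo] at hx
    rw [(hasDerivAt_fmain hx.1 hx.2).deriv]
    exact Dmain_neg hx.1 hx.2
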